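/- Let E be a real inner product space, n ≥ 1, σ > 0, and let z_1, …, z_n ∈ E be unit vectors with labels y_1, …, y_n. Suppose every sample has exactly N ≥ 1 negatives: for all i, the set {j : y_j ≠ y_i} has cardinality N. Then (1/n) ∑_{i=1}^n log(∑_{j ≠ i} exp(⟪z_i, z_j⟫/σ)) ≥ log N + 1/σ − (1/(2σnN)) ∑_{i=1}^n ∑_{j : y_j ≠ y_i} ‖z_i − z_j‖². (This shows the contrastive part of the SNCA loss is an upper bound, up to constants, on the common contrastive term C = −(1/n)∑_i ∑_{j:y_j≠y_i} ‖z_i − z_j‖².) -/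

import Mathlib

open scoped RealInnerProductSpace
open Finset Real

/-- The contrastive part of the SNCA loss is an upper bound, up to constants, on the
common contrastive term `C = -(1/n) ∑ i ∑ (j : y j ≠ y i), ‖z i - z j‖²`:
if every sample has exactly `N ≥ 1` negatives, then
`(1/n) ∑ i, log (∑ j ≠ i, exp (⟪z i, z j⟫ / σ))
  ≥ log N + 1/σ - (1/(2σnN)) ∑ i ∑ (j : y j ≠ y i), ‖z i - z j‖²`. -/
theorem snca_contrastive_ge
    {E : Type*} [NormedAddCommGroup E] [InnerProductSpace ℝ E]
    {L : Type*} [DecidableEq L]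
    (n : ℕ) (hn : 1 ≤ n) (σ : ℝ) (hσ : 0 < σ)
    (z : Fin n → E) (hz : ∀ i, ‖z i‖ = 1)
    (y : Fin n → L)
    (N : ℕ) (hN : 1 ≤ N)
    (hbal : ∀ i, (univ.filter (fun j => y j ≠ y i)).card = N) :
    (1 / (n : ℝ)) * ∑ i, Real.log (∑ j ∈ univ.erase i, Real.exp (⟪z i, z j⟫ / σ))
      ≥ Real.log (N : ℝ) + 1 / σ
        - (1 / (2 * σ * (n : ℝ) * (N : ℝ))) *
            ∑ i, ∑ j ∈ univ.filter (fun j => y j ≠ y i), ‖z i - z j‖ ^ 2 := by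
  have hNpos : (0:ℝ) < N := by exact_mod_cast hN
  have hnpos : (0:ℝ) < n := by exact_mod_cast hn
  have key : ∀ i, Real.log (N : ℝ) + 1 / σ
        - (1 / (2 * σ * (N : ℝ))) * ∑ j ∈ univ.filter (fun j => y j ≠ y i), ‖z i - z j‖ ^ 2
      ≤ Real.log (∑ j ∈ univ.erase i, Real.exp (⟪z i, z j⟫ / σ)) := by
    intro i
    set S := univ.filter (fun j => y j ≠ y i) with hSdef
    have hSsub : S ⊆ univ.erase i := by
      intro j hj
      simp only [hSdef, mem_filter] at hj
      exact mem_erase.2 ⟨fun h => hj.2 (by rw [h]), mem_univ j⟩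
    set a : Fin n → ℝ := fun j => ⟪z i, z j⟫ / σ with ha
    have hJ : Real.exp (∑ j ∈ S, (1/(N:ℝ)) * a j) ≤ ∑ j ∈ S, (1/(N:ℝ)) * Real.exp (a j) := by
      have := convexOn_exp.map_sum_le (t := S) (w := fun _ => 1/(N:ℝ)) (p := a)
        (fun _ _ => by positivity)
        (by rw [Finset.sum_const, hbal i, nsmul_eq_mul]; field_simp)
        (fun _ _ => Set.mem_univ _)
      simpa [smul_eq_mul] using this
    have h2 : (N:ℝ) * Real.exp ((1/(N:ℝ)) * ∑ j ∈ S, a j)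
        ≤ ∑ j ∈ univ.erase i, Real.exp (a j) := by
      have h1 : ∑ j ∈ S, Real.exp (a j) ≤ ∑ j ∈ univ.erase i, Real.exp (a j) :=
        Finset.sum_le_sum_of_subset_of_nonneg hSsub (fun _ _ _ => (Real.exp_pos _).le)
      calc (N:ℝ) * Real.exp ((1/(N:ℝ)) * ∑ j ∈ S, a j)
          = (N:ℝ) * Real.exp (∑ j ∈ S, (1/(N:ℝ)) * a j) := by rw [Finset.mul_sum]
        _ ≤ (N:ℝ) * ∑ j ∈ S, (1/(N:ℝ)) * Real.exp (a j) :=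
            mul_le_mul_of_nonneg_left hJ hNpos.le
        _ = ∑ j ∈ S, Real.exp (a j) := by
            rw [← Finset.mul_sum]; field_simp
        _ ≤ _ := h1
    have hlog : Real.log ((N:ℝ) * Real.exp ((1/(N:ℝ)) * ∑ j ∈ S, a j))
        ≤ Real.log (∑ j ∈ univ.erase i, Real.exp (a j)) :=
      Real.log_le_log (by positivity) h2
    rw [Real.log_mul hNpos.ne' (Real.exp_ne_zero _), Real.log_exp] at hlog
    have hm : (1/(N:ℝ)) * ∑ j ∈ S, a j
        = 1 / σ - (1 / (2 * σ * (N:ℝ))) * ∑ j ∈ S, ‖z i - z j‖ ^ 2 := by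
      have hin : ∀ j, ⟪z i, z j⟫ = 1 - ‖z i - z j‖ ^ 2 / 2 := fun j => by
        have h := norm_sub_sq_real (z i) (z j)
        rw [hz i, hz j] at h; linarith
      simp only [ha, hin]
      rw [show ∑ j ∈ S, (1 - ‖z i - z j‖ ^ 2 / 2) / σ
          = (N:ℝ)/σ - (∑ j ∈ S, ‖z i - z j‖ ^ 2)/(2*σ) by
        simp only [sub_div]
        rw [Finset.sum_sub_distrib, Finset.sum_const, hbal i, nsmul_eq_mul, Finset.sum_div]
        congr 1
        · field_simp
        · exact Finset.sum_congr rfl fun j _ => by ring]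
      field_simp
    rw [hm] at hlog
    linarith
  have hsum : ∑ i, (Real.log (N : ℝ) + 1 / σ
        - (1 / (2 * σ * (N : ℝ))) * ∑ j ∈ univ.filter (fun j => y j ≠ y i), ‖z i - z j‖ ^ 2)
      ≤ ∑ i, Real.log (∑ j ∈ univ.erase i, Real.exp (⟪z i, z j⟫ / σ)) :=
    Finset.sum_le_sum fun i _ => key i
  have := mul_le_mul_of_nonneg_left hsum (by positivity : (0:ℝ) ≤ 1 / (n:ℝ))
  rw [ge_iff_le]
  refine le_trans (le_of_eq ?_) this
  rw [Finset.sum_sub_distrib, Finset.sum_const, Finset.card_univ, Fintype.card_fin,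
    ← Finset.mul_sum]
  field_simp
  have hs : σ * σ⁻¹ = 1 := mul_inv_cancel₀ hσ.ne'
  linear_combination (-(Real.log (N:ℝ) * σ * (n:ℝ) * (N:ℝ) * 2 + (n:ℝ) * (N:ℝ) * 2)) * hs
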